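/- Let C ⊆ ℝ^q be a pointed polyhedral convex cone and P = A + C a polyhedron containing a vertex. Then an extreme direction of P is a C-minimal direction of P if and only if it does not belong to C. -/

import Mathlib

open Matrix Pointwise

/-- `p` is a vertex of `P`. -/
def IsVertexOf (q : ℕ) (P : Set (Fin q → ℝ)) (p : Fin q → ℝ) : Prop :=
  p ∈ P ∧ ∀ y ∈ P, ∀ z ∈ P, p = midpoint ℝ y z → y = z

/-- `F` is a face of the convex set `P`. -/
def IsFaceOf (q : ℕ) (P F : Set (Fin q → ℝ)) : Prop :=
  F ⊆ P ∧ ∀ x ∈ P, ∀ y ∈ P, ∀ t : ℝ, 0 < t → t < 1 →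
    t • x + (1 - t) • y ∈ F → x ∈ F ∧ y ∈ F

/-- `d` is an extreme direction of `P`: some ray `{y + t d : t ≥ 0}` is a
(one-dimensional) face of `P`. -/
def IsExtremeDirOf (q : ℕ) (P : Set (Fin q → ℝ)) (d : Fin q → ℝ) : Prop :=
  d ≠ 0 ∧ ∃ y ∈ P, IsFaceOf q P {z | ∃ t : ℝ, 0 ≤ t ∧ z = y + t • d}

/-- An extreme direction of `P = A + C` (with `C` a pointed polyhedral cone
and `P` having a vertex) is a `C`-minimal direction iff it does not lie in
`C`. -/
theorem extreme_dir_minimal_iff_not_in_cone (q : ℕ) (A C P : Set (Fin q → ℝ))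
    (hCpoly : ∃ (o : ℕ) (Y : Matrix (Fin q) (Fin o) ℝ),
      C = {y | ∃ v : Fin o → ℝ, (∀ i, 0 ≤ v i) ∧ y = Y.mulVec v})
    (hpointed : C ∩ (-C) = {0})
    (hP : P = A + C)
    (hvert : ∃ p, IsVertexOf q P p)
    (d : Fin q → ℝ) (hd : IsExtremeDirOf q P d) :
    (∃ y ∈ P, ∀ μ : ℝ, 0 ≤ μ →
        ∀ ytil ∈ P, (y + μ • d) - ytil ∈ C → ytil = y + μ • d) ↔ d ∉ C := by
  obtain ⟨o, Y, hC⟩ := hCpoly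
  -- C is closed under nonnegative scaling
  have hsmul : ∀ c ∈ C, ∀ r : ℝ, 0 ≤ r → r • c ∈ C := by
    intro c hc r hr
    rw [hC] at hc ⊢
    obtain ⟨v, hv, rfl⟩ := hc
    exact ⟨r • v, fun i => mul_nonneg hr (hv i), (Y.mulVec_smul r v).symm⟩
  -- P + C ⊆ P
  have haddC : ∀ p ∈ P, ∀ c ∈ C, p + c ∈ P := by
    intro p hp c hc
    rw [hP] at hp ⊢
    obtain ⟨a, ha, c', hc', rfl⟩ := hp
    refine ⟨a, ha, c' + c, ?_, (add_assoc _ _ _).symm⟩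
    rw [hC] at hc hc' ⊢
    obtain ⟨v, hv, rfl⟩ := hc
    obtain ⟨v', hv', rfl⟩ := hc'
    exact ⟨v' + v, fun i => add_nonneg (hv' i) (hv i), (Y.mulVec_add v' v).symm⟩
  obtain ⟨hdne, y, hy, hFsub, hface⟩ := hd
  constructor
  · rintro ⟨y', hy', hmin⟩ hdC
    have h1 : (y' + (1:ℝ) • d) - y' ∈ C := by simpa using hdC
    have h2 := hmin 1 zero_le_one y' hy' h1
    apply hdne
    have : y' + (1:ℝ) • d = y' := h2.symm
    have hd0 : (1:ℝ) • d = 0 := by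
      have := congrArg (fun z => z - y') this
      simpa [add_sub_cancel_left] using this
    simpa using hd0
  · intro hdC
    refine ⟨y, hy, ?_⟩
    intro μ hμ ytil hytil hc
    set p := y + μ • d with hp_def
    have hpF : p ∈ {z | ∃ t : ℝ, 0 ≤ t ∧ z = y + t • d} := ⟨μ, hμ, rfl⟩
    have hpP : p ∈ P := hFsub hpF
    have hpcP : p + (p - ytil) ∈ P := haddC p hpP _ hc
    have hmid : (1/2 : ℝ) • ytil + (1 - 1/2 : ℝ) • (p + (p - ytil)) = p := by
      module
    have hres := hface ytil hytil (p + (p - ytil)) hpcP (1/2) (by norm_num)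
      (by norm_num) (by rw [hmid]; exact hpF)
    obtain ⟨⟨s, hs, hsy⟩, ⟨s', hs', hsy'⟩⟩ := hres
    -- p - ytil = (μ - s) • d and also = (s' - μ) • d
    have hc1 : p - ytil = (μ - s) • d := by rw [hsy, hp_def]; module
    have hc2 : p - ytil = (s' - μ) • d := by
      have : p + (p - ytil) - p = (y + s' • d) - p := by rw [hsy']
      rw [add_sub_cancel_left] at this
      rw [this, hp_def]; module
    obtain ⟨i, hi⟩ := Function.ne_iff.mp hdne
    have hrr : μ - s = s' - μ := by
      have := congrFun (hc1.symm.trans hc2) i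
      simp only [Pi.smul_apply, smul_eq_mul] at this
      exact mul_right_cancel₀ hi this
    rcases lt_trichotomy (μ - s) 0 with hr | hr | hr
    · -- then -d ∈ C, contradiction via the face at y
      exfalso
      have hmdC : -d ∈ C := by
        have h3 : (s - μ)⁻¹ • (p - ytil) ∈ C :=
          hsmul _ hc _ (inv_nonneg.mpr (by linarith))
        have h4 : (s - μ)⁻¹ • (p - ytil) = -d := by
          rw [hc1, smul_smul]
          have hne : (s - μ : ℝ) ≠ 0 := by linarith
          have : (s - μ)⁻¹ * (μ - s) = -1 := by field_simp; ring
          rw [this]; module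
        rwa [h4] at h3
      have hymd : y + (-d) ∈ P := haddC y hy _ hmdC
      have hyd : y + d ∈ P := hFsub ⟨1, zero_le_one, by simp⟩
      have hmid2 : (1/2 : ℝ) • (y + (-d)) + (1 - 1/2 : ℝ) • (y + d) = y := by module
      have hres2 := hface (y + (-d)) hymd (y + d) hyd (1/2) (by norm_num)
        (by norm_num) (by rw [hmid2]; exact ⟨0, le_refl 0, by simp⟩)
      obtain ⟨⟨t, ht, hty⟩, -⟩ := hres2
      have : (t + 1) • d = 0 := by
        have := hty
        have h' : -d = t • d := by
          have := congrArg (fun z => z - y) hty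
          simpa [add_sub_cancel_left, add_comm] using this
        have : (t + 1) • d = t • d + d := by module
        rw [this, ← h']; simp
      have ht1 : (t + 1 : ℝ) ≠ 0 := by linarith
      exact hdne (by simpa [ht1] using smul_eq_zero.mp this)
    · -- p - ytil = 0
      have : p - ytil = 0 := by rw [hc1, hr, zero_smul]
      have := sub_eq_zero.mp this
      exact this.symm
    · -- then d ∈ C, contradiction
      exfalso
      apply hdC
      have : (μ - s)⁻¹ • (p - ytil) ∈ C := hsmul _ hc _ (inv_nonneg.mpr (le_of_lt hr))
      rwa [hc1, smul_smul, inv_mul_cancel₀ (ne_of_gt hr), one_smul] at this
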